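/- arXiv:1708.02565 — 7 statements merged into one kernel-verified Lean document; each statement's English description precedes it below -/
import Mathlib

section
/- Let G be a finite group and H a subgroup of G such that the interval [H,G] in the subgroup lattice of G (i.e., the set of subgroups K with H ≤ K ≤ G, ordered by inclusion) is a distributive lattice. Then there exists an element g ∈ G such that the subgroup generated by H and g equals G. -/
open Subgroup

private lemma ore_aux {G : Type*} [Group G] [Finite G] (n : ℕ) (H : Subgroup G)
    (hn : Nat.card G - Nat.card H ≤ n)
    (hdist : ∀ x y z : Subgroup G, H ≤ x → H ≤ y → H ≤ z →
      x ⊓ (y ⊔ z) = (x ⊓ y) ⊔ (x ⊓ z)) :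
    ∃ g : G, H ⊔ Subgroup.closure {g} = ⊤ := by
  induction n generalizing H with
  | zero =>
    have hle : Nat.card G ≤ Nat.card H := by omega
    have : H = ⊤ := H.eq_top_of_card_eq (le_antisymm H.card_le_card_group hle)
    exact ⟨1, by simp [this]⟩
  | succ n ih =>
    by_cases hH : H = ⊤
    · exact ⟨1, by simp [hH]⟩
    · -- find a minimal subgroup A strictly above H
      have : ∃ A : Subgroup G, H < A ∧ ∀ K, H < K → ¬ K < A := by
        obtain ⟨A, hA, hmin⟩ := wellFounded_lt.has_min {K : Subgroup G | H < K}
          ⟨⊤, lt_of_le_of_ne le_top hH⟩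
        exact ⟨A, hA, fun K hK hKA => hmin K hK hKA⟩
      obtain ⟨A, hHA, hmin⟩ := this
      obtain ⟨a, haA, haH⟩ := SetLike.exists_of_lt hHA
      have haA' : a ∈ H ⊔ Subgroup.closure {a} :=
        mem_sup_right (subset_closure (Set.mem_singleton a))
      have hA'eq : H ⊔ Subgroup.closure {a} = A := by
        have h1 : H ⊔ Subgroup.closure {a} ≤ A :=
          sup_le hHA.le ((closure_le A).2 (Set.singleton_subset_iff.2 haA))
        have h2 : H < H ⊔ Subgroup.closure {a} :=
          lt_of_le_of_ne le_sup_left (fun h => haH (h ▸ haA'))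
        rcases h1.lt_or_eq with h | h
        · exact absurd h (hmin _ h2)
        · exact h
      -- cardinality decreases
      have hcard : Nat.card H < Nat.card A := by
        have h := Set.ncard_lt_ncard (SetLike.coe_ssubset_coe.2 hHA) (Set.toFinite (A : Set G))
        rwa [← Nat.card_coe_set_eq, ← Nat.card_coe_set_eq] at h
      have hcardA : Nat.card A ≤ Nat.card G := A.card_le_card_group
      -- apply IH to A
      obtain ⟨b, hb⟩ := ih A (by omega)
        (fun x y z hx hy hz => hdist x y z (hHA.le.trans hx) (hHA.le.trans hy) (hHA.le.trans hz))
      set B := H ⊔ Subgroup.closure {b} with hB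
      have hbB : b ∈ B := mem_sup_right (subset_closure (Set.mem_singleton b))
      by_cases hAB : A ≤ B
      · refine ⟨b, le_antisymm le_top ?_⟩
        rw [← hb]
        exact sup_le (hAB.trans le_rfl) le_sup_right
      · -- A ⊓ B = H
        have hABH : A ⊓ B = H := by
          rcases (le_inf hHA.le le_sup_left).lt_or_eq with h | h
          · exact absurd (lt_of_le_of_ne inf_le_left
              (fun he => hAB (he.symm.le.trans inf_le_right))) (hmin (A ⊓ B) h)
          · exact h.symm
        have htop : A ⊔ B = ⊤ := by
          rw [eq_top_iff, ← hb]
          exact sup_le le_sup_left (le_sup_of_le_right le_sup_right)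
        set L := H ⊔ Subgroup.closure {a * b} with hL
        have habL : a * b ∈ L := mem_sup_right (subset_closure (Set.mem_singleton _))
        have hHL : H ≤ L := le_sup_left
        have hLA : L ⊔ A = ⊤ := by
          rw [eq_top_iff, ← htop]
          refine sup_le le_sup_right ?_
          refine sup_le (le_sup_of_le_left hHL) ?_
          rw [closure_le, Set.singleton_subset_iff]
          have ha' : a ∈ L ⊔ A := mem_sup_right haA
          have hab' : a * b ∈ L ⊔ A := mem_sup_left habL
          simpa using mul_mem (inv_mem ha') hab'
        have hLB : L ⊔ B = ⊤ := by
          rw [eq_top_iff, ← htop]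
          refine sup_le ?_ le_sup_right
          rw [← hA'eq]
          refine sup_le (le_sup_of_le_left hHL) ?_
          rw [closure_le, Set.singleton_subset_iff]
          have hb' : b ∈ L ⊔ B := mem_sup_right hbB
          have hab' : a * b ∈ L ⊔ B := mem_sup_left habL
          simpa using mul_mem hab' (inv_mem hb')
        -- dual distributivity
        have key : (L ⊔ A) ⊓ (L ⊔ B) = L ⊔ (A ⊓ B) := by
          have e1 : (L ⊔ A) ⊓ (L ⊔ B) = ((L ⊔ A) ⊓ L) ⊔ ((L ⊔ A) ⊓ B) :=
            hdist _ _ _ (hHL.trans le_sup_left) hHL le_sup_left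
          have e2 : (L ⊔ A) ⊓ L = L := inf_eq_right.mpr le_sup_left
          have e3 : (L ⊔ A) ⊓ B = (B ⊓ L) ⊔ (B ⊓ A) := by
            rw [inf_comm]
            exact hdist B L A le_sup_left hHL hHA.le
          have e4 : L ⊔ (B ⊓ L) = L := sup_eq_left.mpr inf_le_right
          rw [e1, e2, e3, ← sup_assoc, e4, inf_comm B A]
        refine ⟨a * b, ?_⟩
        show L = ⊤
        calc L = L ⊔ H := (sup_eq_left.mpr hHL).symm
          _ = L ⊔ (A ⊓ B) := by rw [hABH]
          _ = (L ⊔ A) ⊓ (L ⊔ B) := key.symm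
          _ = ⊤ := by rw [hLA, hLB, inf_idem]

/-- **Ore's theorem.** If the interval `[H, G]` in the subgroup lattice of a finite
group `G` is distributive, then there exists `g ∈ G` with `⟨H, g⟩ = G`. -/
theorem ore_distributive_interval_cyclic {G : Type*} [Group G] [Finite G] (H : Subgroup G)
    (hdist : ∀ x y z : Subgroup G, H ≤ x → H ≤ y → H ≤ z →
      x ⊓ (y ⊔ z) = (x ⊓ y) ⊔ (x ⊓ z)) :
    ∃ g : G, H ⊔ Subgroup.closure {g} = ⊤ :=
  ore_aux (Nat.card G - Nat.card H) H le_rfl hdist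
end

section
/- Let G be a finite group and H a subgroup of G such that the interval [H,G] in the subgroup lattice is a Boolean lattice (i.e., distributive and complemented). Then there exists an element g ∈ G such that the subgroup generated by H and g equals G. -/
/-- If the interval `[H, G]` in the subgroup lattice of a finite group `G` is a Boolean
lattice (distributive and complemented), then there exists `g ∈ G` with `⟨H, g⟩ = G`. -/
theorem boolean_interval_cyclic {G : Type*} [Group G] [Finite G] (H : Subgroup G)
    (hdist : ∀ x y z : Subgroup G, H ≤ x → H ≤ y → H ≤ z →
      x ⊓ (y ⊔ z) = (x ⊓ y) ⊔ (x ⊓ z))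
    (hcompl : ∀ K : Subgroup G, H ≤ K →
      ∃ K' : Subgroup G, H ≤ K' ∧ K ⊓ K' = H ∧ K ⊔ K' = ⊤) :
    ∃ g : G, H ⊔ Subgroup.closure {g} = ⊤ := by
  classical
  suffices h : ∀ n (K : Subgroup G), H ≤ K → Nat.card K ≤ n →
      ∃ g, H ⊔ Subgroup.closure {g} = K by
    obtain ⟨g, hg⟩ := h (Nat.card (⊤ : Subgroup G)) ⊤ le_top le_rfl
    exact ⟨g, hg⟩
  intro n
  induction n with
  | zero =>
    intro K _ hcard
    have : 0 < Nat.card K := Nat.card_pos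
    omega
  | succ n ih =>
    intro K hHK hcard
    by_cases hKH : K ≤ H
    · refine ⟨1, ?_⟩
      rw [Subgroup.closure_singleton_one, sup_bot_eq]
      exact le_antisymm hHK hKH
    · obtain ⟨a, haK, haH⟩ := SetLike.exists_of_lt (lt_of_le_of_ne hHK
        (fun h => hKH h.ge))
      set A := H ⊔ Subgroup.closure {a} with hAdef
      have haA : a ∈ A := Subgroup.mem_sup_right (Subgroup.subset_closure rfl)
      have hHA : H ≤ A := le_sup_left
      have hA_le : A ≤ K := sup_le hHK ((Subgroup.closure_le _).2 (by
        simpa using haK))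
      obtain ⟨A', hHA', hAA'inf, hAA'sup⟩ := hcompl A hHA
      set B := A' ⊓ K with hBdef
      have hHB : H ≤ B := le_inf hHA' hHK
      have hB_le : B ≤ K := inf_le_right
      have hABinf : A ⊓ B = H := by
        calc A ⊓ (A' ⊓ K) = (A ⊓ A') ⊓ K := (inf_assoc A A' K).symm
          _ = H ⊓ K := by rw [hAA'inf]
          _ = H := inf_eq_left.2 hHK
      have hABsup : A ⊔ B = K := by
        have h1 := hdist K A A' hHK hHA hHA'
        rw [hAA'sup, inf_top_eq, inf_eq_right.2 hA_le, inf_comm K A'] at h1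
        exact h1.symm
      have hBK : B < K := by
        refine lt_of_le_of_ne hB_le (fun hb => haH ?_)
        have hAH : A = H := by
          rw [← hABinf, hb, inf_eq_left.2 hA_le]
        rw [← hAH]; exact haA
      have hcardB : Nat.card B < Nat.card K := by
        have h := Set.ncard_lt_ncard (SetLike.coe_ssubset_coe.2 hBK) (Set.toFinite _)
        rwa [← Nat.card_coe_set_eq, ← Nat.card_coe_set_eq] at h
      obtain ⟨c, hc⟩ := ih B hHB (by omega)
      have hcB : c ∈ B := by
        rw [← hc]; exact Subgroup.mem_sup_right (Subgroup.subset_closure rfl)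
      have hcK : c ∈ K := hB_le hcB
      set L := H ⊔ Subgroup.closure {a * c} with hLdef
      have hHL : H ≤ L := le_sup_left
      have hacL : a * c ∈ L := Subgroup.mem_sup_right (Subgroup.subset_closure rfl)
      have hL_le : L ≤ K := sup_le hHK ((Subgroup.closure_le _).2 (by
        simpa using mul_mem haK hcK))
      have hAL : L ⊔ A = K := by
        refine le_antisymm (sup_le hL_le hA_le) ?_
        have hcLA : c ∈ L ⊔ A := by
          have : c = a⁻¹ * (a * c) := by group
          rw [this]
          exact mul_mem (Subgroup.mem_sup_right (inv_mem haA)) (Subgroup.mem_sup_left hacL)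
        have hBLA : B ≤ L ⊔ A := by
          rw [← hc]
          exact sup_le (le_trans hHL le_sup_left)
            ((Subgroup.closure_le _).2 (by simpa using hcLA))
        rw [← hABsup]
        exact sup_le le_sup_right hBLA
      have hBL : L ⊔ B = K := by
        refine le_antisymm (sup_le hL_le hB_le) ?_
        have haLB : a ∈ L ⊔ B := by
          have : a = (a * c) * c⁻¹ := by group
          rw [this]
          exact mul_mem (Subgroup.mem_sup_left hacL) (Subgroup.mem_sup_right (inv_mem hcB))
        have hALB : A ≤ L ⊔ B := by
          exact sup_le (le_trans hHL le_sup_left)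
            ((Subgroup.closure_le _).2 (by simpa using haLB))
        rw [← hABsup]
        exact sup_le hALB le_sup_right
      refine ⟨a * c, ?_⟩
      have key : (L ⊔ A) ⊓ (L ⊔ B) = L := by
        rw [hdist (L ⊔ A) L B (le_trans hHL le_sup_left) hHL hHB]
        have h2 : (L ⊔ A) ⊓ B = (B ⊓ L) ⊔ H := by
          rw [inf_comm (L ⊔ A) B, hdist B L A hHB hHL hHA, inf_comm B A, hABinf]
        have h3 : (L ⊔ A) ⊓ L = L := inf_eq_right.2 le_sup_left
        rw [h3, h2]
        exact sup_eq_left.2 (sup_le inf_le_right hHL)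
      calc H ⊔ Subgroup.closure {a * c} = (L ⊔ A) ⊓ (L ⊔ B) := key.symm
        _ = K := by rw [hAL, hBL, inf_idem]
end

section
/- Let G be a finite group and H a subgroup of G. Let t be the intersection of all coatoms (maximal elements below G) of the interval [H,G], and suppose the top interval [t,G] is a Boolean lattice. Then there exists an element g ∈ G such that the subgroup generated by H and g equals G. -/
/-- If the top interval `[t, G]` of `[H, G]` (where `t` is the intersection of all
coatoms of `[H, G]`) is a Boolean lattice, then there exists `g ∈ G` with `⟨H, g⟩ = G`. -/
theorem top_boolean_interval_cyclic {G : Type*} [Group G] [Finite G] (H : Subgroup G)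
    (t : Subgroup G) (ht : t = sInf {M : Subgroup G | H ≤ M ∧ IsCoatom M})
    (hdist : ∀ x y z : Subgroup G, t ≤ x → t ≤ y → t ≤ z →
      x ⊓ (y ⊔ z) = (x ⊓ y) ⊔ (x ⊓ z))
    (hcompl : ∀ K : Subgroup G, t ≤ K →
      ∃ K' : Subgroup G, t ≤ K' ∧ K ⊓ K' = t ∧ K ⊔ K' = ⊤) :
    ∃ g : G, H ⊔ Subgroup.closure {g} = ⊤ := by
  classical
  set 𝒯 : Set (Subgroup G) := {M : Subgroup G | H ≤ M ∧ IsCoatom M} with h𝒯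
  -- uniqueness of complements in the distributive interval [t, ⊤]
  have uniq : ∀ a b c : Subgroup G, t ≤ a → t ≤ b → t ≤ c →
      a ⊓ b = t → a ⊔ b = ⊤ → a ⊓ c = t → a ⊔ c = ⊤ → b = c := by
    intro a b c ha hb hc hib hsb hic hsc
    have key : ∀ u v : Subgroup G, t ≤ u → t ≤ v → a ⊓ u = t → a ⊔ v = ⊤ → u ≤ v := by
      intro u v hu hv hiu hsv
      have h1 : u ⊓ (a ⊔ v) = (u ⊓ a) ⊔ (u ⊓ v) := hdist u a v hu ha hv
      rw [hsv, inf_top_eq, inf_comm, hiu] at h1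
      calc u = t ⊔ (u ⊓ v) := h1
        _ ≤ (u ⊓ v) := sup_le (le_inf hu hv) le_rfl
        _ ≤ v := inf_le_right
    exact le_antisymm (key b c hb hc hib hsc) (key c b hc hb hic hsb)
  have htmem : ∀ M ∈ 𝒯, t ≤ M := fun M hM => ht ▸ sInf_le hM
  -- main induction
  have main : ∀ S : Finset (Subgroup G), ↑S ⊆ 𝒯 →
      ∃ g : G, (∀ M ∈ 𝒯, M ∉ S → g ∈ M) ∧ ∀ M ∈ S, g ∉ M := by
    intro S
    induction S using Finset.induction_on with
    | empty =>
      intro _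
      exact ⟨1, fun M _ _ => one_mem M, fun M h => absurd h (Finset.notMem_empty M)⟩
    | @insert M₁ S' hM₁S' ih =>
      intro hsub
      have hM₁𝒯 : M₁ ∈ 𝒯 := hsub (Finset.mem_insert_self _ _)
      have hS'sub : ↑S' ⊆ 𝒯 := fun M h => hsub (Finset.mem_insert_of_mem h)
      obtain ⟨x, hx1, hx2⟩ := ih hS'sub
      have htM₁ : t ≤ M₁ := htmem M₁ hM₁𝒯
      obtain ⟨K, htK, hKinf, hKsup⟩ := hcompl M₁ htM₁
      have hKne : K ≠ t := by
        intro h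
        rw [h, sup_eq_left.mpr htM₁] at hKsup
        exact hM₁𝒯.2.1 hKsup
      -- K is an atom of [t, ⊤]
      have atomK : ∀ L : Subgroup G, t ≤ L → L ≤ K → L = t ∨ L = K := by
        intro L htL hLK
        by_cases hLM₁ : L ≤ M₁
        · left
          exact le_antisymm (hKinf ▸ le_inf hLM₁ hLK) htL
        · right
          have hsup : M₁ ⊔ L = ⊤ := hM₁𝒯.2.2 _ (left_lt_sup.mpr hLM₁)
          have hinf : M₁ ⊓ L = t :=
            le_antisymm (hKinf ▸ inf_le_inf_left M₁ hLK) (le_inf htM₁ htL)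
          exact (uniq M₁ K L htM₁ htK htL hKinf hKsup hinf hsup).symm
      -- K lies in every other coatom of 𝒯
      have hKle : ∀ M ∈ 𝒯, M ≠ M₁ → K ≤ M := by
        intro M hM hne
        by_contra hnle
        have htM : t ≤ M := htmem M hM
        have hsup : M ⊔ K = ⊤ := hM.2.2 _ (left_lt_sup.mpr hnle)
        have hinf : M ⊓ K = t := by
          rcases atomK (M ⊓ K) (le_inf htM htK) inf_le_right with h | h
          · exact h
          · exact absurd (h ▸ inf_le_left : K ≤ M) hnle
        exact hne (uniq K M M₁ htK htM htM₁ (by rw [inf_comm]; exact hinf)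
          (by rw [sup_comm]; exact hsup) (by rw [inf_comm]; exact hKinf)
          (by rw [sup_comm]; exact hKsup))
      -- choose y ∈ K \ t, hence y ∉ M₁
      have hKnt : ¬ K ≤ t := fun h => hKne (le_antisymm h htK)
      obtain ⟨y, hyK, hyt⟩ := SetLike.not_le_iff_exists.mp hKnt
      have hyM₁ : y ∉ M₁ := fun h => hyt (hKinf ▸ Subgroup.mem_inf.mpr ⟨h, hyK⟩)
      by_cases hxM₁ : x ∈ M₁
      · refine ⟨x * y, ?_, ?_⟩
        · intro M hM hMS
          have hne : M ≠ M₁ := fun h => hMS (h ▸ Finset.mem_insert_self _ _)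
          have hMnotS' : M ∉ S' := fun h => hMS (Finset.mem_insert_of_mem h)
          exact mul_mem (hx1 M hM hMnotS') (hKle M hM hne hyK)
        · intro M hMmem
          rcases Finset.mem_insert.mp hMmem with h | h
          · subst h
            intro hmem
            exact hyM₁ (by simpa using mul_mem (inv_mem hxM₁) hmem)
          · have hne : M ≠ M₁ := fun he => hM₁S' (he ▸ h)
            intro hmem
            exact hx2 M h (by simpa using mul_mem hmem (inv_mem (hKle M (hS'sub h) hne hyK)))
      · refine ⟨x, ?_, ?_⟩
        · intro M hM hMS
          exact hx1 M hM fun h => hMS (Finset.mem_insert_of_mem h)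
        · intro M hMmem
          rcases Finset.mem_insert.mp hMmem with h | h
          · subst h; exact hxM₁
          · exact hx2 M h
  have hfin : 𝒯.Finite := Set.toFinite _
  obtain ⟨g, _, hg2⟩ := main hfin.toFinset (by simp [Set.Finite.coe_toFinset])
  refine ⟨g, ?_⟩
  by_contra hne
  obtain ⟨M, hM, hle⟩ := (eq_top_or_exists_le_coatom (H ⊔ Subgroup.closure {g})).resolve_left hne
  have hM𝒯 : M ∈ 𝒯 := ⟨le_sup_left.trans hle, hM⟩
  exact hg2 M (hfin.mem_toFinset.mpr hM𝒯)
    (hle (le_sup_right (a := H) (Subgroup.subset_closure (Set.mem_singleton g))))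
end

section
/- A finite group G is cyclic if and only if its subgroup lattice (the lattice of all subgroups of G ordered by inclusion, with meet the intersection and join the subgroup generated by the union) is a distributive lattice. -/
lemma ore_gcd_lcm_dvd {a b c : ℕ} (ha : a ≠ 0) (hb : b ≠ 0) (hc : c ≠ 0) :
    Nat.gcd a (Nat.lcm b c) ∣ Nat.lcm (Nat.gcd a b) (Nat.gcd a c) := by
  have hbc : Nat.lcm b c ≠ 0 := Nat.lcm_ne_zero hb hc
  have h1 : Nat.gcd a (Nat.lcm b c) ≠ 0 := Nat.gcd_ne_zero_left ha
  have hab : Nat.gcd a b ≠ 0 := Nat.gcd_ne_zero_left ha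
  have hac : Nat.gcd a c ≠ 0 := Nat.gcd_ne_zero_left ha
  have h2 : Nat.lcm (Nat.gcd a b) (Nat.gcd a c) ≠ 0 := Nat.lcm_ne_zero hab hac
  rw [← Nat.factorization_le_iff_dvd h1 h2, Nat.factorization_gcd ha hbc,
    Nat.factorization_lcm hb hc, Nat.factorization_lcm hab hac,
    Nat.factorization_gcd ha hb, Nat.factorization_gcd ha hc]
  intro p
  simp only [Finsupp.inf_apply, Finsupp.sup_apply]
  omega

lemma ore_lcm_div (a b : ℕ) (ha : a ≠ 0) : Nat.lcm a b / a = b / Nat.gcd a b := by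
  have hd : Nat.gcd a b ∣ b := Nat.gcd_dvd_right a b
  have h : Nat.lcm a b = a * (b / Nat.gcd a b) := by
    rw [Nat.lcm, Nat.mul_div_assoc a hd]
  rw [h, Nat.mul_div_cancel_left _ (Nat.pos_of_ne_zero ha)]

lemma ore_coprime {a b : ℕ} (ha : a ≠ 0) (hb : b ≠ 0) :
    Nat.Coprime (Nat.lcm a b / a) (Nat.lcm a b / b) := by
  have hg : 0 < Nat.gcd a b := Nat.gcd_pos_of_pos_left _ (Nat.pos_of_ne_zero ha)
  have h2 : Nat.lcm a b / b = a / Nat.gcd a b := by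
    rw [Nat.lcm_comm, ore_lcm_div b a hb, Nat.gcd_comm]
  rw [ore_lcm_div a b ha, h2]
  exact (Nat.coprime_div_gcd_div_gcd hg).symm

/-- In a finite cyclic group, membership in a subgroup is detected by `x ^ (card H) = 1`. -/
lemma ore_mem_iff_pow {G : Type*} [Group G] [Finite G] [IsCyclic G] (H : Subgroup G) (w : G) :
    w ∈ H ↔ w ^ Nat.card H = 1 := by
  classical
  cases nonempty_fintype G
  have key : ∀ u : G, ∀ hu : u ∈ H, u ^ Nat.card H = 1 := by
    intro u hu
    have h1 : (⟨u, hu⟩ : H) ^ Nat.card H = 1 := pow_card_eq_one'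
    have h2 := congrArg (Subtype.val) h1
    push_cast at h2
    exact h2
  constructor
  · exact key w
  · intro hw
    have hd0 : 0 < Nat.card H := Nat.card_pos
    have hsub : (H : Set G).toFinset ⊆
        Finset.filter (fun a => a ^ Nat.card H = 1) Finset.univ := by
      intro u hu
      rw [Set.mem_toFinset] at hu
      simp only [Finset.mem_filter, Finset.mem_univ, true_and]
      exact key u hu
    have hcard1 : (H : Set G).toFinset.card = Nat.card H := by
      simp only [Set.toFinset_card, SetLike.coe_sort_coe, Nat.card_eq_fintype_card]
    have hcard2 : (Finset.filter (fun a : G => a ^ Nat.card H = 1) Finset.univ).card ≤ Nat.card H :=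
      IsCyclic.card_pow_eq_one_le hd0
    have heq := Finset.eq_of_subset_of_card_le hsub (le_trans hcard2 hcard1.ge)
    have hmem : w ∈ (H : Set G).toFinset := by
      rw [heq, Finset.mem_filter]
      exact ⟨Finset.mem_univ w, hw⟩
    rwa [Set.mem_toFinset] at hmem

lemma ore_pow_eq_one_of_dvd {G : Type*} [Group G] {u : G} {a b : ℕ} (h : u ^ a = 1)
    (hd : a ∣ b) : u ^ b = 1 := by
  obtain ⟨k, rfl⟩ := hd
  rw [pow_mul, h, one_pow]

/-- The subgroup of elements of exponent dividing `n`, in a commutative situation. -/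
def oreExpSubgroup {G : Type*} [Group G] (hc : ∀ a b : G, a * b = b * a) (n : ℕ) :
    Subgroup G where
  carrier := {x | x ^ n = 1}
  one_mem' := one_pow n
  mul_mem' := by
    intro a b ha hb
    simp only [Set.mem_setOf_eq] at *
    rw [(show Commute a b from hc a b).mul_pow, ha, hb, one_mul]
  inv_mem' := by
    intro a ha
    simp only [Set.mem_setOf_eq] at *
    rw [inv_pow, ha, inv_one]

lemma ore_comm_of_cyclic {G : Type*} [Group G] [IsCyclic G] : ∀ a b : G, a * b = b * a := by
  obtain ⟨g, hg⟩ := IsCyclic.exists_generator (α := G)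
  intro a b
  obtain ⟨i, hi⟩ := Subgroup.mem_zpowers_iff.mp (hg a)
  obtain ⟨j, hj⟩ := Subgroup.mem_zpowers_iff.mp (hg b)
  rw [← hi, ← hj]
  exact ((Commute.refl g).zpow_zpow i j).eq

lemma ore_forward {G : Type*} [Group G] [Finite G] [IsCyclic G] (x y z : Subgroup G) :
    x ⊓ (y ⊔ z) = (x ⊓ y) ⊔ (x ⊓ z) := by
  have hc : ∀ a b : G, a * b = b * a := ore_comm_of_cyclic
  apply le_antisymm
  · intro w hw
    obtain ⟨hwx, hwyz⟩ := Subgroup.mem_inf.mp hw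
    have hdx : Nat.card x ≠ 0 := Nat.card_pos.ne'
    have hdy : Nat.card y ≠ 0 := Nat.card_pos.ne'
    have hdz : Nat.card z ≠ 0 := Nat.card_pos.ne'
    have hwdx : w ^ Nat.card x = 1 := (ore_mem_iff_pow x w).mp hwx
    have hyzL : y ⊔ z ≤ oreExpSubgroup hc (Nat.lcm (Nat.card y) (Nat.card z)) := by
      apply sup_le
      · intro u hu
        exact ore_pow_eq_one_of_dvd ((ore_mem_iff_pow y u).mp hu) (Nat.dvd_lcm_left _ _)
      · intro u hu
        exact ore_pow_eq_one_of_dvd ((ore_mem_iff_pow z u).mp hu) (Nat.dvd_lcm_right _ _)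
    have hwL : w ^ Nat.lcm (Nat.card y) (Nat.card z) = 1 := hyzL hwyz
    set m1 := Nat.gcd (Nat.card x) (Nat.card y) with hm1def
    set m2 := Nat.gcd (Nat.card x) (Nat.card z) with hm2def
    set L := Nat.lcm m1 m2 with hLdef
    have hm1 : m1 ≠ 0 := Nat.gcd_ne_zero_left hdx
    have hm2 : m2 ≠ 0 := Nat.gcd_ne_zero_left hdx
    have hord : orderOf w ∣ L :=
      (Nat.dvd_gcd (orderOf_dvd_of_pow_eq_one hwdx) (orderOf_dvd_of_pow_eq_one hwL)).trans
        (ore_gcd_lcm_dvd hdx hdy hdz)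
    have hwL' : w ^ L = 1 := orderOf_dvd_iff_pow_eq_one.mp hord
    have hb1 : w ^ (L / m1) ∈ x ⊓ y := by
      have h1 : (w ^ (L / m1)) ^ m1 = 1 := by
        rw [← pow_mul, Nat.div_mul_cancel (Nat.dvd_lcm_left m1 m2)]
        exact hwL'
      exact Subgroup.mem_inf.mpr
        ⟨(ore_mem_iff_pow x _).mpr (ore_pow_eq_one_of_dvd h1 (Nat.gcd_dvd_left _ _)),
         (ore_mem_iff_pow y _).mpr (ore_pow_eq_one_of_dvd h1 (Nat.gcd_dvd_right _ _))⟩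
    have hb2 : w ^ (L / m2) ∈ x ⊓ z := by
      have h1 : (w ^ (L / m2)) ^ m2 = 1 := by
        rw [← pow_mul, Nat.div_mul_cancel (Nat.dvd_lcm_right m1 m2)]
        exact hwL'
      exact Subgroup.mem_inf.mpr
        ⟨(ore_mem_iff_pow x _).mpr (ore_pow_eq_one_of_dvd h1 (Nat.gcd_dvd_left _ _)),
         (ore_mem_iff_pow z _).mpr (ore_pow_eq_one_of_dvd h1 (Nat.gcd_dvd_right _ _))⟩
    have hcop : Nat.Coprime (L / m1) (L / m2) := ore_coprime hm1 hm2
    set s := Nat.gcdA (L / m1) (L / m2) with hs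
    set t := Nat.gcdB (L / m1) (L / m2) with ht
    have hbez : (1 : ℤ) = (L / m1 : ℕ) * s + (L / m2 : ℕ) * t := by
      have := Nat.gcd_eq_gcd_ab (L / m1) (L / m2)
      rwa [Nat.Coprime.gcd_eq_one hcop, Nat.cast_one] at this
    have hw_eq : w = (w ^ (L / m1)) ^ s * (w ^ (L / m2)) ^ t := by
      calc w = w ^ (1 : ℤ) := (zpow_one w).symm
        _ = w ^ ((L / m1 : ℕ) * s + (L / m2 : ℕ) * t) := by rw [← hbez]
        _ = w ^ ((L / m1 : ℕ) * s) * w ^ ((L / m2 : ℕ) * t) := zpow_add w _ _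
        _ = (w ^ (L / m1)) ^ s * (w ^ (L / m2)) ^ t := by
            rw [zpow_mul, zpow_mul, zpow_natCast, zpow_natCast]
    rw [hw_eq]
    exact mul_mem (Subgroup.mem_sup_left (Subgroup.zpow_mem _ hb1 s))
      (Subgroup.mem_sup_right (Subgroup.zpow_mem _ hb2 t))
  · exact sup_le (le_inf inf_le_left (inf_le_right.trans le_sup_left))
      (le_inf inf_le_left (inf_le_right.trans le_sup_right))

open Subgroup in
lemma ore_comm_of_distrib {G : Type*} [Group G]
    (h : ∀ x y z : Subgroup G, x ⊓ (y ⊔ z) = (x ⊓ y) ⊔ (x ⊓ z)) (a b : G) :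
    a * b = b * a := by
  set A := zpowers a with hA
  set B := zpowers b with hB
  set C := zpowers (a * b) with hC
  have h1 : A ⊔ B = A ⊔ C := by
    apply le_antisymm
    · apply sup_le le_sup_left
      apply zpowers_le.mpr
      have hb : b = a⁻¹ * (a * b) := by group
      rw [hb]
      exact mul_mem (inv_mem (Subgroup.mem_sup_left (mem_zpowers a)))
        (Subgroup.mem_sup_right (mem_zpowers (a * b)))
    · apply sup_le le_sup_left
      apply zpowers_le.mpr
      exact mul_mem (Subgroup.mem_sup_left (mem_zpowers a))
        (Subgroup.mem_sup_right (mem_zpowers b))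
  have h2 : A ⊔ B = B ⊔ C := by
    apply le_antisymm
    · refine sup_le ?_ le_sup_left
      apply zpowers_le.mpr
      have ha : a = (a * b) * b⁻¹ := by group
      rw [ha]
      exact mul_mem (Subgroup.mem_sup_right (mem_zpowers (a * b)))
        (inv_mem (Subgroup.mem_sup_left (mem_zpowers b)))
    · apply sup_le le_sup_right
      apply zpowers_le.mpr
      exact mul_mem (Subgroup.mem_sup_left (mem_zpowers a))
        (Subgroup.mem_sup_right (mem_zpowers b))
  have key : A ⊔ B = (A ⊓ B) ⊔ C := by
    have e1 : A ⊔ B = (A ⊔ C) ⊓ (B ⊔ C) := by rw [← h1, ← h2, inf_idem]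
    calc A ⊔ B = (A ⊔ C) ⊓ (B ⊔ C) := e1
      _ = ((A ⊔ C) ⊓ B) ⊔ ((A ⊔ C) ⊓ C) := h _ B C
      _ = ((A ⊔ C) ⊓ B) ⊔ C := by rw [inf_eq_right.mpr (le_sup_right : C ≤ A ⊔ C)]
      _ = (B ⊓ (A ⊔ C)) ⊔ C := by rw [inf_comm (A ⊔ C) B]
      _ = ((B ⊓ A) ⊔ (B ⊓ C)) ⊔ C := by rw [h B A C]
      _ = (B ⊓ A) ⊔ ((B ⊓ C) ⊔ C) := sup_assoc _ _ _
      _ = (B ⊓ A) ⊔ C := by rw [sup_eq_right.mpr (inf_le_right : B ⊓ C ≤ C)]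
      _ = (A ⊓ B) ⊔ C := by rw [inf_comm B A]
  set S : Set G := (↑(A ⊓ B) : Set G) ∪ {a * b} with hSdef
  have hS : closure S = A ⊔ B := by
    rw [hSdef, Subgroup.closure_union, Subgroup.closure_eq, ← zpowers_eq_closure, ← hC, key]
  have hcomAB : ∀ s ∈ A ⊓ B, Commute s a ∧ Commute s b := by
    intro s hs
    obtain ⟨m, hm⟩ := mem_zpowers_iff.mp hs.1
    obtain ⟨n, hn⟩ := mem_zpowers_iff.mp hs.2
    constructor
    · rw [← hm]; exact (Commute.refl a).zpow_left m
    · rw [← hn]; exact (Commute.refl b).zpow_left n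
  have hcomm : ∀ s ∈ S, ∀ t ∈ S, s * t = t * s := by
    intro s hs t ht
    rcases hs with hs | hs <;> rcases ht with ht | ht
    · obtain ⟨n, hn⟩ := mem_zpowers_iff.mp (SetLike.mem_coe.mp ht).1
      rw [← hn]
      exact (((hcomAB s (SetLike.mem_coe.mp hs)).1).zpow_right n).eq
    · rw [Set.mem_singleton_iff.mp ht]
      obtain ⟨hsa, hsb⟩ := hcomAB s (SetLike.mem_coe.mp hs)
      exact (hsa.mul_right hsb).eq
    · rw [Set.mem_singleton_iff.mp hs]
      obtain ⟨hta, htb⟩ := hcomAB t (SetLike.mem_coe.mp ht)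
      exact ((hta.mul_right htb).symm).eq
    · rw [Set.mem_singleton_iff.mp hs, Set.mem_singleton_iff.mp ht]
  have hcent : ∀ u ∈ closure S, ∀ v ∈ closure S, u * v = v * u := by
    have hc1 : closure S ≤ centralizer S :=
      (closure_le _).mpr fun s hs => mem_centralizer_iff.mpr fun t ht => hcomm t ht s hs
    intro u hu v hv
    have hu' := mem_centralizer_iff.mp (hc1 hu)
    have hc2 : closure S ≤ centralizer {u} :=
      (closure_le _).mpr fun s hs => mem_centralizer_iff.mpr fun t ht => by
        rw [Set.mem_singleton_iff.mp ht]
        exact (hu' s hs).symm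
    exact mem_centralizer_iff.mp (hc2 hv) u rfl
  have haS : a ∈ closure S := by rw [hS]; exact Subgroup.mem_sup_left (mem_zpowers a)
  have hbS : b ∈ closure S := by rw [hS]; exact Subgroup.mem_sup_right (mem_zpowers b)
  exact hcent a haS b hbS

/-- Two distinct subgroups generated by elements of prime order intersect trivially. -/
lemma ore_inf_eq_bot {G : Type*} [Group G] [Finite G] {u v : G} {p : ℕ} (hp : p.Prime)
    (hu : orderOf u = p) (hv : orderOf v = p) (huv : u ∉ Subgroup.zpowers v) :
    Subgroup.zpowers u ⊓ Subgroup.zpowers v = ⊥ := by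
  have hcard : Nat.card (Subgroup.zpowers u ⊓ Subgroup.zpowers v : Subgroup G) ∣ p := by
    have := Subgroup.card_dvd_of_le (inf_le_right :
      Subgroup.zpowers u ⊓ Subgroup.zpowers v ≤ Subgroup.zpowers v)
    rwa [Nat.card_zpowers, hv] at this
  rcases (Nat.dvd_prime hp).mp hcard with h1 | h1
  · exact Subgroup.eq_bot_of_card_eq _ h1
  · exfalso
    have heq : Subgroup.zpowers u ⊓ Subgroup.zpowers v = Subgroup.zpowers v :=
      Subgroup.eq_of_le_of_card_ge inf_le_right (by rw [h1, Nat.card_zpowers, hv])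
    have hle : Subgroup.zpowers v ≤ Subgroup.zpowers u := heq ▸ inf_le_left
    have heq2 : Subgroup.zpowers v = Subgroup.zpowers u :=
      Subgroup.eq_of_le_of_card_ge hle (by rw [Nat.card_zpowers, Nat.card_zpowers, hu, hv])
    exact huv (heq2 ▸ Subgroup.mem_zpowers u)

lemma ore_backward {G : Type*} [Group G] [Finite G]
    (h : ∀ x y z : Subgroup G, x ⊓ (y ⊔ z) = (x ⊓ y) ⊔ (x ⊓ z)) : IsCyclic G := by
  have hc : ∀ a b : G, a * b = b * a := ore_comm_of_distrib h
  letI : CommGroup G := { ‹Group G› with mul_comm := hc }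
  by_contra hnc
  obtain ⟨g, hg⟩ := Monoid.exists_orderOf_eq_exponent (Monoid.ExponentExists.of_finite (G := G))
  set e := Monoid.exponent G with he_def
  have he0 : e ≠ 0 := Monoid.exponent_ne_zero_of_finite
  have htop : Subgroup.zpowers g ≠ ⊤ := by
    intro ht
    refine hnc ⟨⟨g, fun x => ?_⟩⟩
    have hx : x ∈ Subgroup.zpowers g := by rw [ht]; exact Subgroup.mem_top x
    exact hx
  -- find x outside `zpowers g` with `x ^ p ∈ zpowers g` for a prime `p`
  obtain ⟨x0, hx0⟩ : ∃ x : G, x ∉ Subgroup.zpowers g := by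
    by_contra hall
    push_neg at hall
    exact htop ((Subgroup.eq_top_iff' _).mpr hall)
  set N := Subgroup.zpowers g with hN
  have : Nontrivial (G ⧸ N) := by
    refine ⟨⟨QuotientGroup.mk x0, 1, fun h1 => hx0 ?_⟩⟩
    rwa [QuotientGroup.eq_one_iff] at h1
  have hQcard : 1 < Nat.card (G ⧸ N) := Finite.one_lt_card
  set p := (Nat.card (G ⧸ N)).minFac with hp_def
  have hp : p.Prime := Nat.minFac_prime (by omega)
  haveI : Fact p.Prime := ⟨hp⟩
  obtain ⟨xq, hxq⟩ := exists_prime_orderOf_dvd_card' (G := G ⧸ N) p (Nat.minFac_dvd _)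
  obtain ⟨x, rfl⟩ := QuotientGroup.mk_surjective xq
  have hxnot : x ∉ N := by
    intro hx
    rw [← QuotientGroup.eq_one_iff] at hx
    rw [hx, orderOf_one] at hxq
    exact hp.one_lt.ne' hxq.symm
  have hxp : x ^ p ∈ N := by
    rw [← QuotientGroup.eq_one_iff, QuotientGroup.mk_pow, ← hxq]
    exact pow_orderOf_eq_one _
  obtain ⟨k, hk⟩ := Subgroup.mem_zpowers_iff.mp hxp
  -- p divides e
  have hpG : p ∣ Nat.card G := by
    refine (Nat.minFac_dvd _).trans ?_
    rw [Subgroup.card_eq_card_quotient_mul_card_subgroup N]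
    exact Dvd.intro _ rfl
  have hpe : p ∣ e := by
    obtain ⟨y, hy⟩ := exists_prime_orderOf_dvd_card' (G := G) p hpG
    exact hy ▸ Monoid.order_dvd_exponent y
  have hep0 : (e / p) ≠ 0 := by
    intro h0
    have := Nat.mul_div_cancel' hpe
    rw [h0, Nat.mul_zero] at this
    exact he0 this.symm
  -- p divides k
  have hge : g ^ (k * (e / p : ℕ)) = 1 := by
    have h1 : (x ^ p) ^ (e / p) = x ^ e := by rw [← pow_mul, Nat.mul_div_cancel' hpe]
    calc g ^ (k * (e / p : ℕ)) = (g ^ k) ^ ((e / p : ℕ) : ℤ) := by rw [← zpow_mul]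
      _ = (x ^ p) ^ (e / p) := by rw [hk, zpow_natCast]
      _ = x ^ e := h1
      _ = 1 := Monoid.pow_exponent_eq_one x
  have hdvd : (e : ℤ) ∣ k * (e / p : ℕ) := by
    have := orderOf_dvd_iff_zpow_eq_one.mpr hge
    rwa [hg] at this
  have hpk : (p : ℤ) ∣ k := by
    obtain ⟨c, hc'⟩ := hdvd
    have hepz : ((e / p : ℕ) : ℤ) ≠ 0 := Int.natCast_ne_zero.mpr hep0
    have he_eq : (e : ℤ) = (p : ℤ) * ((e / p : ℕ) : ℤ) := by
      exact_mod_cast congrArg (Nat.cast : ℕ → ℤ) (Nat.mul_div_cancel' hpe).symm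
    refine ⟨c, ?_⟩
    have : k * ((e / p : ℕ) : ℤ) = ((p : ℤ) * c) * ((e / p : ℕ) : ℤ) := by
      rw [hc', he_eq]; ring
    exact mul_right_cancel₀ hepz this
  obtain ⟨j, hj⟩ := hpk
  set y := x * g ^ (-j) with hy_def
  have hyp : y ^ p = 1 := by
    rw [hy_def, mul_pow, ← hk, ← zpow_natCast (g ^ (-j)) p, ← zpow_mul, ← zpow_add]
    rw [hj]
    have : p * j + -j * p = 0 := by ring
    rw [this, zpow_zero]
  have hynot : y ∉ N := by
    intro hy
    apply hxnot
    have hx_eq : x = y * g ^ j := by rw [hy_def]; group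
    rw [hx_eq]
    exact mul_mem hy (Subgroup.zpow_mem _ (Subgroup.mem_zpowers g) j)
  have hy1 : y ≠ 1 := fun h1 => hynot (h1 ▸ one_mem N)
  have hyord : orderOf y = p := by
    rcases (Nat.dvd_prime hp).mp (orderOf_dvd_of_pow_eq_one hyp) with h1 | h1
    · exact absurd (orderOf_eq_one_iff.mp h1) hy1
    · exact h1
  set z := g ^ (e / p) with hz_def
  have hzord : orderOf z = p := by
    rw [hz_def, orderOf_pow' g hep0, hg, Nat.gcd_eq_right (Nat.div_dvd_of_dvd hpe),
      Nat.div_div_self hpe he0]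
  have hzg : z ∈ N := by rw [hz_def]; exact Subgroup.pow_mem _ (Subgroup.mem_zpowers g) _
  have hzy1 : z * y ≠ 1 := by
    intro h1
    apply hynot
    have : y = z⁻¹ := by
      rw [eq_inv_iff_mul_eq_one, mul_comm]
      exact h1
    rw [this]
    exact inv_mem hzg
  have hzyp : (z * y) ^ p = 1 := by
    rw [mul_pow, hyp, mul_one, ← hzord]
    exact pow_orderOf_eq_one z
  have hzyord : orderOf (z * y) = p := by
    rcases (Nat.dvd_prime hp).mp (orderOf_dvd_of_pow_eq_one hzyp) with h1 | h1
    · exact absurd (orderOf_eq_one_iff.mp h1) hzy1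
    · exact h1
  have hyz_not : y ∉ Subgroup.zpowers z := fun hy =>
    hynot (Subgroup.zpowers_le.mpr hzg hy)
  have hzyP : z * y ∉ Subgroup.zpowers z := by
    intro hzy
    exact hyz_not (by
      have : y = z⁻¹ * (z * y) := by group
      rw [this]
      exact mul_mem (inv_mem (Subgroup.mem_zpowers z)) hzy)
  have hzyQ : z * y ∉ Subgroup.zpowers y := by
    intro hzy
    have hzmem : z ∈ Subgroup.zpowers y := by
      have : z = (z * y) * y⁻¹ := by group
      rw [this]
      exact mul_mem hzy (inv_mem (Subgroup.mem_zpowers y))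
    have hle : Subgroup.zpowers z ≤ Subgroup.zpowers y := Subgroup.zpowers_le.mpr hzmem
    have heq : Subgroup.zpowers z = Subgroup.zpowers y :=
      Subgroup.eq_of_le_of_card_ge hle
        (by rw [Nat.card_zpowers, Nat.card_zpowers, hzord, hyord])
    exact hyz_not (heq ▸ Subgroup.mem_zpowers y)
  have hinf1 := ore_inf_eq_bot hp hzyord hzord hzyP
  have hinf2 := ore_inf_eq_bot hp hzyord hyord hzyQ
  have hRle : Subgroup.zpowers (z * y) ≤ Subgroup.zpowers z ⊔ Subgroup.zpowers y :=
    Subgroup.zpowers_le.mpr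
      (mul_mem (Subgroup.mem_sup_left (Subgroup.mem_zpowers z))
        (Subgroup.mem_sup_right (Subgroup.mem_zpowers y)))
  have hfinal := h (Subgroup.zpowers (z * y)) (Subgroup.zpowers z) (Subgroup.zpowers y)
  rw [hinf1, hinf2, sup_idem, inf_eq_left.mpr hRle] at hfinal
  exact hzy1 (Subgroup.mem_bot.mp (hfinal ▸ Subgroup.mem_zpowers (z * y)))

/-- **Ore's theorem.** A finite group is cyclic if and only if its subgroup lattice
is distributive. -/
theorem isCyclic_iff_distributive_subgroup_lattice {G : Type*} [Group G] [Finite G] :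
    IsCyclic G ↔
      ∀ x y z : Subgroup G, x ⊓ (y ⊔ z) = (x ⊓ y) ⊔ (x ⊓ z) := by
  constructor
  · intro _ x y z
    exact ore_forward x y z
  · exact ore_backward
end

section
/- Let G be a finite group, H ≤ K ≤ G subgroups, and U an irreducible finite-dimensional complex representation of K with nonzero H-fixed subspace U^H ≠ 0. Let W = Ind_K^G(U) be the induced representation of G, with U identified with the K-subrepresentation e ⊗ U of W. Then the pointwise stabilizer in G of the H-fixed subspace W^H is contained in the pointwise stabilizer in K of U^H, i.e., G_{(W^H)} ≤ K_{(U^H)}. -/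
/-- The fixed-point subspace `V^H` of a subgroup `H` under a representation `ρ`. -/
def fixedSubmodule {G : Type*} [Group G] {V : Type*} [AddCommGroup V] [Module ℂ V]
    (ρ : Representation ℂ G V) (H : Subgroup G) : Submodule ℂ V where
  carrier := {v | ∀ h ∈ H, ρ h v = v}
  add_mem' := by
    intro a b ha hb h hh
    rw [map_add, ha h hh, hb h hh]
  zero_mem' := by intro h hh; simp
  smul_mem' := by
    intro c v hv h hh
    rw [map_smul, hv h hh]

/-- The pointwise stabilizer subgroup `G_(X)` of a subset `X` under a representation `ρ`. -/
def repStab {G : Type*} [Group G] {V : Type*} [AddCommGroup V] [Module ℂ V]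
    (ρ : Representation ℂ G V) (X : Set V) : Subgroup G where
  carrier := {g | ∀ x ∈ X, ρ g x = x}
  one_mem' := by intro x hx; simp
  mul_mem' := by
    intro a b ha hb x hx
    rw [map_mul, Module.End.mul_apply, hb x hx, ha x hx]
  inv_mem' := by
    intro a ha x hx
    have h1 : ρ a x = x := ha x hx
    calc ρ a⁻¹ x = ρ a⁻¹ (ρ a x) := by rw [h1]
      _ = ρ (a⁻¹ * a) x := by rw [map_mul, Module.End.mul_apply]
      _ = x := by simp

/-- A representation is irreducible if the space is nontrivial and the only invariant
subspaces are `⊥` and `⊤`. -/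
def IsIrredRep {G : Type*} [Group G] {V : Type*} [AddCommGroup V] [Module ℂ V]
    (ρ : Representation ℂ G V) : Prop :=
  Nontrivial V ∧ ∀ p : Submodule ℂ V, (∀ g : G, ∀ v ∈ p, ρ g v ∈ p) → p = ⊥ ∨ p = ⊤

/-- The carrier of the induced representation `Ind_K^G U`, realized as the space of
functions `f : G → U` satisfying `f (k * g) = σ k (f g)`; the canonical copy `eU` of `U`
inside it consists of the functions supported on `K`. -/
def indCarrier {G : Type*} [Group G] {U : Type*} [AddCommGroup U] [Module ℂ U]
    (K : Subgroup G) (σ : Representation ℂ K U) : Submodule ℂ (G → U) where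
  carrier := {f | ∀ (k : K) (g : G), f (↑k * g) = σ k (f g)}
  add_mem' := by
    intro a b ha hb k g
    simp [ha k g, hb k g]
  zero_mem' := by intro k g; simp
  smul_mem' := by
    intro c f hf k g
    simp [hf k g]

/-- The induced representation `Ind_K^G U`, with `G` acting by right translation. -/
def indRep {G : Type*} [Group G] {U : Type*} [AddCommGroup U] [Module ℂ U]
    (K : Subgroup G) (σ : Representation ℂ K U) :
    Representation ℂ G (indCarrier K σ) where
  toFun g :=
    { toFun := fun f => ⟨fun x => (f : G → U) (x * g), by
        intro k x
        have := f.2 k (x * g)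
        simpa [mul_assoc] using this⟩
      map_add' := by intro a b; ext x; simp
      map_smul' := by intro c a; ext x; simp }
  map_one' := by ext f x; simp
  map_mul' := by
    intro g g'
    ext f x
    simp [mul_assoc]

open scoped Classical in
noncomputable def extZero {G : Type*} [Group G] {U : Type*} [AddCommGroup U] [Module ℂ U]
    (K : Subgroup G) (σ : Representation ℂ K U) (u : U) : G → U :=
  fun x => if h : x ∈ K then σ ⟨x, h⟩ u else 0

lemma extZero_mem_ind {G : Type*} [Group G] {U : Type*} [AddCommGroup U] [Module ℂ U]
    (K : Subgroup G) (σ : Representation ℂ K U) (u : U) :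
    extZero K σ u ∈ indCarrier K σ := by
  intro k x
  by_cases hx : x ∈ K
  · have hkx : (↑k * x) ∈ K := K.mul_mem k.2 hx
    simp only [extZero, dif_pos hx, dif_pos hkx]
    have h1 : (⟨↑k * x, hkx⟩ : K) = k * ⟨x, hx⟩ := rfl
    rw [h1, map_mul]; rfl
  · have hkx : ¬(↑k * x) ∈ K := by
      intro h
      exact hx (by simpa using K.mul_mem (K.inv_mem k.2) h)
    simp [extZero, dif_neg hx, dif_neg hkx]

lemma extZero_fixed {G : Type*} [Group G] {U : Type*} [AddCommGroup U] [Module ℂ U]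
    {H K : Subgroup G} (hHK : H ≤ K) (σ : Representation ℂ K U) {u : U}
    (hu : u ∈ fixedSubmodule σ (H.subgroupOf K)) :
    (⟨extZero K σ u, extZero_mem_ind K σ u⟩ : indCarrier K σ) ∈
      fixedSubmodule (indRep K σ) H := by
  intro h hh
  apply Subtype.ext
  funext x
  show extZero K σ u (x * h) = extZero K σ u x
  have hhK : h ∈ K := hHK hh
  by_cases hx : x ∈ K
  · have hxh : x * h ∈ K := K.mul_mem hx hhK
    simp only [extZero, dif_pos hx, dif_pos hxh]
    have h1 : (⟨x * h, hxh⟩ : K) = ⟨x, hx⟩ * ⟨h, hhK⟩ := rfl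
    rw [h1, map_mul]
    have h2 : σ ⟨h, hhK⟩ u = u := hu ⟨h, hhK⟩ (by simpa [Subgroup.mem_subgroupOf] using hh)
    simp [Module.End.mul_apply, h2]
  · have hxh : ¬(x * h) ∈ K := fun hc => hx (by simpa using K.mul_mem hc (K.inv_mem hhK))
    simp [extZero, dif_neg hx, dif_neg hxh]

/-- For `H ≤ K ≤ G` and `U` an irreducible representation of `K` with `U^H ≠ 0`,
the pointwise stabilizer in `G` of `W^H` (where `W = Ind_K^G U`) is contained in the
pointwise stabilizer in `K` of `U^H`. -/
theorem repStab_ind_le_repStab {G : Type*} [Group G] [Finite G]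
    (H K : Subgroup G) (hHK : H ≤ K)
    {U : Type*} [AddCommGroup U] [Module ℂ U] [FiniteDimensional ℂ U]
    (σ : Representation ℂ K U) (hσ : IsIrredRep σ)
    (hUH : fixedSubmodule σ (H.subgroupOf K) ≠ ⊥) :
    repStab (indRep K σ) ↑(fixedSubmodule (indRep K σ) H) ≤
      (repStab σ ↑(fixedSubmodule σ (H.subgroupOf K))).map K.subtype := by
  classical
  intro g hg
  rw [Submodule.ne_bot_iff] at hUH
  obtain ⟨u, hu, hune⟩ := hUH
  -- key: for v ∈ U^H, the extension by zero is fixed by g, so extZero v (x*g) = extZero v x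
  have key : ∀ v ∈ fixedSubmodule σ (H.subgroupOf K), ∀ x : G,
      extZero K σ v (x * g) = extZero K σ v x := by
    intro v hv x
    have := hg ⟨extZero K σ v, extZero_mem_ind K σ v⟩ (extZero_fixed hHK σ hv)
    have := congrFun (congrArg (Subtype.val) this) x
    exact this
  have hg1 : extZero K σ u g = u := by
    have := key u hu 1
    simpa [extZero, dif_pos K.one_mem, show (⟨(1:G), K.one_mem⟩ : K) = 1 from rfl] using this
  have hgK : g ∈ K := by
    by_contra hgK
    rw [extZero, dif_neg hgK] at hg1
    exact hune hg1.symm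
  refine Subgroup.mem_map.mpr ⟨⟨g, hgK⟩, ?_, rfl⟩
  intro v hv
  have h1 : extZero K σ v g = v := by
    have := key v hv 1
    simpa [extZero, dif_pos K.one_mem, show (⟨(1:G), K.one_mem⟩ : K) = 1 from rfl] using this
  rw [extZero, dif_pos hgK] at h1
  exact h1
end

section
/- Let G be a finite group, H ≤ K ≤ G subgroups, and U an irreducible finite-dimensional complex representation of K with U^H ≠ 0. Let V be an irreducible component (irreducible G-subrepresentation) of the induced representation W = Ind_K^G(U). Then V^H ≠ 0 and the pointwise stabilizer in K of V^H is contained in the pointwise stabilizer in K of U^H, i.e., K_{(V^H)} ≤ K_{(U^H)}. -/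
set_option synthInstance.maxHeartbeats 1000000
set_option maxHeartbeats 1000000

/-- The subrepresentation on an invariant submodule. -/
def subRep {G : Type*} [Group G] {V : Type*} [AddCommGroup V] [Module ℂ V]
    (ρ : Representation ℂ G V) (p : Submodule ℂ V)
    (hp : ∀ g : G, ∀ v ∈ p, ρ g v ∈ p) : Representation ℂ G p where
  toFun g := (ρ g).restrict (hp g)
  map_one' := by
    ext v
    simp [LinearMap.restrict_apply]
  map_mul' := by
    intro g g'
    ext v
    simp [LinearMap.restrict_apply, map_mul]

section Aux

variable {G : Type*} [Group G] {U : Type*} [AddCommGroup U] [Module ℂ U]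

@[simp] lemma indRep_apply (K : Subgroup G) (σ : Representation ℂ K U) (g : G)
    (f : indCarrier K σ) (x : G) :
    ((indRep K σ g f : indCarrier K σ) : G → U) x = (f : G → U) (x * g) := rfl

lemma indCarrier_spec {K : Subgroup G} {σ : Representation ℂ K U}
    (f : indCarrier K σ) (k : K) (g : G) :
    (f : G → U) (↑k * g) = σ k ((f : G → U) g) := f.2 k g

lemma mem_fixedSubmodule_iff {V : Type*} [AddCommGroup V] [Module ℂ V]
    (ρ : Representation ℂ G V) (H : Subgroup G) (v : V) :
    v ∈ fixedSubmodule ρ H ↔ ∀ h ∈ H, ρ h v = v := Iff.rfl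

lemma mem_repStab_iff {V : Type*} [AddCommGroup V] [Module ℂ V]
    (ρ : Representation ℂ G V) (X : Set V) (g : G) :
    g ∈ repStab ρ X ↔ ∀ x ∈ X, ρ g x = x := Iff.rfl

open Classical in
noncomputable def eMap (K : Subgroup G) (σ : Representation ℂ K U) :
    U →ₗ[ℂ] indCarrier K σ where
  toFun u := ⟨fun g => if h : g ∈ K then σ ⟨g, h⟩ u else 0, by
    intro k g
    by_cases hg : g ∈ K
    · have hkg : (↑k : G) * g ∈ K := K.mul_mem k.2 hg
      simp only [dif_pos hg, dif_pos hkg]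
      have h1 : (⟨↑k * g, hkg⟩ : K) = k * ⟨g, hg⟩ := rfl
      rw [h1, map_mul]
      rfl
    · have hkg : (↑k : G) * g ∉ K := by
        intro h
        exact hg (by simpa using K.mul_mem (K.inv_mem k.2) h)
      simp [dif_neg hg, dif_neg hkg]⟩
  map_add' u v := by
    ext g
    by_cases hg : g ∈ K <;> simp [hg]
  map_smul' c u := by
    ext g
    by_cases hg : g ∈ K <;> simp [hg]

open Classical in
lemma eMap_apply (K : Subgroup G) (σ : Representation ℂ K U) (u : U) (g : G) :
    ((eMap K σ u : indCarrier K σ) : G → U) g = if h : g ∈ K then σ ⟨g, h⟩ u else 0 := rfl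

lemma eMap_comm (K : Subgroup G) (σ : Representation ℂ K U) (k : K) (u : U) :
    indRep K σ ↑k (eMap K σ u) = eMap K σ (σ k u) := by
  classical
  ext g
  rw [indRep_apply, eMap_apply, eMap_apply]
  by_cases hg : g ∈ K
  · have hgk : g * (↑k : G) ∈ K := K.mul_mem hg k.2
    rw [dif_pos hgk, dif_pos hg]
    have h1 : (⟨g * ↑k, hgk⟩ : K) = ⟨g, hg⟩ * k := rfl
    rw [h1, map_mul]
    rfl
  · have hgk : g * (↑k : G) ∉ K := by
      intro h
      exact hg (by simpa using K.mul_mem h (K.inv_mem k.2))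
    rw [dif_neg hgk, dif_neg hg]

lemma sum_translate_eMap [Fintype G] (K : Subgroup G) (σ : Representation ℂ K U)
    (f : indCarrier K σ) :
    ∑ g : G, indRep K σ g⁻¹ (eMap K σ ((f : G → U) g)) = (Nat.card K) • f := by
  classical
  ext x
  rw [AddSubmonoidClass.coe_finset_sum, Finset.sum_apply]
  have step1 : ∀ g : G,
      ((indRep K σ g⁻¹ (eMap K σ ((f : G → U) g)) : indCarrier K σ) : G → U) x
        = if h : x * g⁻¹ ∈ K then σ ⟨x * g⁻¹, h⟩ ((f : G → U) g) else 0 := by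
    intro g
    rw [indRep_apply, eMap_apply]
  simp only [step1]
  have step2 : ∑ g : G, (if h : x * g⁻¹ ∈ K then σ ⟨x * g⁻¹, h⟩ ((f : G → U) g) else 0)
      = ∑ g : G, (if h : g ∈ K then σ ⟨g, h⟩ ((f : G → U) (g⁻¹ * x)) else 0) := by
    refine Fintype.sum_equiv ((Equiv.inv G).trans (Equiv.mulLeft x)) _ _ ?_
    intro g
    have h1 : ((Equiv.inv G).trans (Equiv.mulLeft x)) g = x * g⁻¹ := rfl
    rw [h1]
    have h2 : (x * g⁻¹)⁻¹ * x = g := by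
      rw [mul_inv_rev, inv_inv, mul_assoc, inv_mul_cancel, mul_one]
    simp only [h2]
  rw [step2]
  have step3 : ∑ g : G, (if h : g ∈ K then σ ⟨g, h⟩ ((f : G → U) (g⁻¹ * x)) else 0)
      = ∑ k : K, σ k ((f : G → U) ((↑k)⁻¹ * x)) := by
    rw [← Finset.sum_subset (Finset.filter_subset (fun g => g ∈ K) Finset.univ)
      (by intro g _ hg; rw [dif_neg (by simpa using hg)])]
    rw [Finset.sum_subtype (p := fun g => g ∈ K) (Finset.univ.filter (fun g => g ∈ K))
      (by intro y; simp)
      (fun g => if h : g ∈ K then σ ⟨g, h⟩ ((f : G → U) (g⁻¹ * x)) else 0)]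
    apply Finset.sum_congr rfl
    intro k _
    rw [dif_pos k.2]
  rw [step3]
  have step4 : ∀ k : K, σ k ((f : G → U) ((↑k)⁻¹ * x)) = (f : G → U) x := by
    intro k
    have h1 : ((↑k)⁻¹ : G) = ↑(k⁻¹) := rfl
    rw [h1, indCarrier_spec f k⁻¹ x, ← Module.End.mul_apply, ← map_mul]
    simp
  simp only [step4]
  rw [Finset.sum_const]
  have : ((Nat.card ↥K • f : indCarrier K σ) : G → U) x = Nat.card ↥K • (f : G → U) x := rfl
  rw [this, Finset.card_univ, Nat.card_eq_fintype_card]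

end Aux

/-- For `H ≤ K ≤ G`, `U` an irreducible representation of `K` with `U^H ≠ 0`, and `V`
an irreducible component of `W = Ind_K^G U`: `V^H ≠ 0` and the pointwise stabilizer in
`K` of `V^H` is contained in the pointwise stabilizer in `K` of `U^H`. -/
theorem fixed_ne_bot_and_stab_le_of_component {G : Type*} [Group G] [Finite G]
    (H K : Subgroup G) (hHK : H ≤ K)
    {U : Type*} [AddCommGroup U] [Module ℂ U] [FiniteDimensional ℂ U]
    (σ : Representation ℂ K U) (hσ : IsIrredRep σ)
    (hUH : fixedSubmodule σ (H.subgroupOf K) ≠ ⊥)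
    (p : Submodule ℂ (indCarrier K σ))
    (hp : ∀ g : G, ∀ v ∈ p, indRep K σ g v ∈ p)
    (hpirr : IsIrredRep (V := ↥p) (subRep (indRep K σ) p hp)) :
    fixedSubmodule (indRep K σ) H ⊓ p ≠ ⊥ ∧
      K ⊓ repStab (indRep K σ) ↑(fixedSubmodule (indRep K σ) H ⊓ p) ≤
        (repStab σ ↑(fixedSubmodule σ (H.subgroupOf K))).map K.subtype := by
  
  classical
  cases nonempty_fintype G
  obtain ⟨q, hq⟩ := Submodule.exists_isCompl p
  obtain ⟨proj, hproj_mem, hproj_id⟩ :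
      ∃ proj : ↥(indCarrier K σ) →ₗ[ℂ] ↥(indCarrier K σ),
        (∀ x, proj x ∈ p) ∧ (∀ x ∈ p, proj x = x) := by
    refine ⟨p.subtype ∘ₗ (p.projectionOnto q hq), fun x => (p.projectionOnto q hq x).2, ?_⟩
    intro x hx
    show ((p.projectionOnto q hq) x : ↥(indCarrier K σ)) = x
    rw [show x = ((⟨x, hx⟩ : ↥p) : ↥(indCarrier K σ)) from rfl,
      Submodule.projectionOnto_apply_left hq]
  obtain ⟨π, hπ_apply⟩ :
      ∃ π : ↥(indCarrier K σ) →ₗ[ℂ] ↥(indCarrier K σ),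
        ∀ x, π x = ∑ g : G, indRep K σ g (proj (indRep K σ g⁻¹ x)) :=
    ⟨∑ g : G, (indRep K σ g) ∘ₗ proj ∘ₗ (indRep K σ g⁻¹), fun x => by
      rw [LinearMap.sum_apply]; rfl⟩
  have hρmul : ∀ (a b : G) (x : ↥(indCarrier K σ)),
      indRep K σ a (indRep K σ b x) = indRep K σ (a * b) x := by
    intro a b x
    rw [map_mul]
    rfl
  have hπ_mem : ∀ x, π x ∈ p := by
    intro x
    rw [hπ_apply]
    exact Submodule.sum_mem _ fun g _ => hp g _ (hproj_mem _)
  have hπ_comm : ∀ (g₀ : G) (x : ↥(indCarrier K σ)),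
      π (indRep K σ g₀ x) = indRep K σ g₀ (π x) := by
    intro g₀ x
    rw [hπ_apply, hπ_apply, map_sum]
    refine (Fintype.sum_equiv (Equiv.mulLeft g₀)
      (fun g => indRep K σ g₀ (indRep K σ g (proj (indRep K σ g⁻¹ x))))
      (fun g => indRep K σ g (proj (indRep K σ g⁻¹ (indRep K σ g₀ x)))) ?_).symm
    intro g
    show indRep K σ g₀ (indRep K σ g (proj (indRep K σ g⁻¹ x))) =
      indRep K σ ((Equiv.mulLeft g₀) g)
        (proj (indRep K σ ((Equiv.mulLeft g₀) g)⁻¹ (indRep K σ g₀ x)))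
    have h1 : (Equiv.mulLeft g₀) g = g₀ * g := rfl
    rw [h1, hρmul, hρmul]
    have h2 : (g₀ * g)⁻¹ * g₀ = g⁻¹ := by
      rw [mul_inv_rev, mul_assoc, inv_mul_cancel, mul_one]
    rw [h2]
  have hπ_id : ∀ x ∈ p, π x = (Fintype.card G) • x := by
    intro x hx
    rw [hπ_apply]
    have h1 : ∀ g : G, indRep K σ g (proj (indRep K σ g⁻¹ x)) = x := by
      intro g
      rw [hproj_id _ (hp g⁻¹ x hx), hρmul]
      simp
    simp only [h1]
    rw [Finset.sum_const, Finset.card_univ]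
  obtain ⟨E, hEdef⟩ : ∃ E : U →ₗ[ℂ] ↥(indCarrier K σ), ∀ u, E u = π (eMap K σ u) :=
    ⟨π ∘ₗ eMap K σ, fun u => rfl⟩
  have hE_mem : ∀ u, E u ∈ p := fun u => by rw [hEdef]; exact hπ_mem _
  have hE_comm : ∀ (k : K) (u : U), E (σ k u) = indRep K σ ↑k (E u) := by
    intro k u
    rw [hEdef, hEdef, ← eMap_comm, hπ_comm]
  have hE_ne : ∃ u, E u ≠ 0 := by
    by_contra hcon
    push_neg at hcon
    have : Nontrivial ↥p := hpirr.1
    obtain ⟨y, hy⟩ := exists_ne (0 : ↥p)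
    have hy0 : (y : ↥(indCarrier K σ)) ≠ 0 := fun h => hy (Subtype.ext h)
    have key := congrArg π (sum_translate_eMap K σ (y : ↥(indCarrier K σ)))
    have lhs0 : π (∑ g : G,
        indRep K σ g⁻¹ (eMap K σ (((y : ↥(indCarrier K σ)) : G → U) g))) = 0 := by
      rw [map_sum]
      apply Finset.sum_eq_zero
      intro g _
      rw [hπ_comm, ← hEdef, hcon, map_zero]
    have rhs0 : π ((Nat.card ↥K) • (y : ↥(indCarrier K σ)))
        = (Nat.card ↥K * Fintype.card G) • (y : ↥(indCarrier K σ)) := by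
      rw [map_nsmul, hπ_id _ y.2, smul_smul]
    rw [lhs0, rhs0] at key
    have hcast : ((Nat.card ↥K * Fintype.card G : ℕ) : ℂ) • (y : ↥(indCarrier K σ)) = 0 := by
      rw [Nat.cast_smul_eq_nsmul]
      exact key.symm
    have hne : ((Nat.card ↥K * Fintype.card G : ℕ) : ℂ) ≠ 0 := by
      have h1 : 0 < Nat.card ↥K := Nat.card_pos
      have h2 : 0 < Fintype.card G := Fintype.card_pos
      exact_mod_cast Nat.mul_ne_zero h1.ne' h2.ne'
    exact hy0 ((smul_eq_zero.mp hcast).resolve_left hne)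
  obtain ⟨u₁, hu₁⟩ := hE_ne
  have hker : LinearMap.ker E = ⊥ := by
    have hinv : ∀ (k : K), ∀ u ∈ LinearMap.ker E, σ k u ∈ LinearMap.ker E := by
      intro k u hu
      rw [LinearMap.mem_ker] at hu ⊢
      rw [hE_comm, hu, map_zero]
    rcases hσ.2 (LinearMap.ker E) hinv with h | h
    · exact h
    · exact absurd (LinearMap.mem_ker.mp (h ▸ Submodule.mem_top : u₁ ∈ LinearMap.ker E)) hu₁
  have hE_inj : Function.Injective E := LinearMap.ker_eq_bot.mp hker
  obtain ⟨u₀, hu₀mem, hu₀ne⟩ := (Submodule.ne_bot_iff _).mp hUH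
  have hfix : ∀ u ∈ fixedSubmodule σ (H.subgroupOf K),
      E u ∈ fixedSubmodule (indRep K σ) H ⊓ p := by
    intro u hu
    rw [mem_fixedSubmodule_iff] at hu
    refine Submodule.mem_inf.mpr ⟨?_, hE_mem u⟩
    rw [mem_fixedSubmodule_iff]
    intro h hh
    have hk : (⟨h, hHK hh⟩ : K) ∈ H.subgroupOf K := Subgroup.mem_subgroupOf.mpr hh
    calc indRep K σ h (E u) = indRep K σ ↑(⟨h, hHK hh⟩ : K) (E u) := rfl
      _ = E (σ ⟨h, hHK hh⟩ u) := (hE_comm _ u).symm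
      _ = E u := by rw [hu _ hk]
  constructor
  · rw [Submodule.ne_bot_iff]
    exact ⟨E u₀, hfix u₀ hu₀mem,
      fun h0 => hu₀ne (hE_inj (h0.trans (map_zero E).symm))⟩
  · intro g hg
    obtain ⟨hgK, hgS⟩ := Subgroup.mem_inf.mp hg
    rw [Subgroup.mem_map]
    refine ⟨⟨g, hgK⟩, ?_, rfl⟩
    rw [mem_repStab_iff]
    intro u hu
    have huM : u ∈ fixedSubmodule σ (H.subgroupOf K) := hu
    have h1 : indRep K σ g (E u) = E u :=
      hgS (E u) (SetLike.mem_coe.mpr (hfix u huM))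
    have h2 : E (σ ⟨g, hgK⟩ u) = E u := by
      rw [hE_comm]
      exact h1
    exact hE_inj h2
end

section
/- Let G be a finite group and H a subgroup of G with H < G. Let K be the join of all atoms of the interval [H,G] (the minimal subgroups strictly containing H). If the bottom interval [H,K] is linearly primitive (i.e., there exists an irreducible complex representation U of K with K_{(U^H)} = H), then the interval [H,G] is linearly primitive (i.e., there exists an irreducible complex representation V of G with G_{(V^H)} = H). -/
namespace LPAux

def rreg (G : Type) [Group G] (U : Type) [AddCommGroup U] [Module ℂ U] :
    Representation ℂ G (G → U) where
  toFun g := LinearMap.funLeft ℂ U (· * g)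
  map_one' := by ext f x; simp
  map_mul' g h := by ext f x; simp [LinearMap.funLeft_apply, Module.End.mul_apply, mul_assoc]

@[simp] lemma rreg_apply {G : Type} [Group G] {U : Type} [AddCommGroup U] [Module ℂ U]
    (g : G) (f : G → U) (x : G) : rreg G U g f x = f (x * g) := rfl

def indP {G : Type} [Group G] (K : Subgroup G) {U : Type} [AddCommGroup U] [Module ℂ U]
    (ρU : Representation ℂ ↥K U) : Submodule ℂ (G → U) where
  carrier := {f | ∀ (k : ↥K) (g : G), f (↑k * g) = ρU k (f g)}
  add_mem' := by intro a b ha hb k g; simp [ha k g, hb k g]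
  zero_mem' := by intro k g; simp
  smul_mem' := by intro c f hf k g; simp [hf k g]

lemma mem_indP {G : Type} [Group G] {K : Subgroup G} {U : Type} [AddCommGroup U]
    [Module ℂ U] {ρU : Representation ℂ ↥K U} {f : G → U} :
    f ∈ indP K ρU ↔ ∀ (k : ↥K) (g : G), f (↑k * g) = ρU k (f g) := Iff.rfl

lemma indP_invariant {G : Type} [Group G] (K : Subgroup G) {U : Type} [AddCommGroup U]
    [Module ℂ U] (ρU : Representation ℂ ↥K U) :
    ∀ g : G, ∀ f ∈ indP K ρU, rreg G U g f ∈ indP K ρU := by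
  intro g f hf k x
  have h1 : rreg G U g f (↑k * x) = f (↑k * (x * g)) := by
    simp [mul_assoc]
  rw [h1, hf k (x * g)]
  rfl

def resRep {G V : Type} [Group G] [AddCommGroup V] [Module ℂ V]
    (ρ : Representation ℂ G V) (W : Submodule ℂ V) (hW : ∀ g, ∀ v ∈ W, ρ g v ∈ W) :
    Representation ℂ G ↥W where
  toFun g := (ρ g).restrict (hW g)
  map_one' := by
    ext v
    simp [LinearMap.restrict_apply]
  map_mul' g h := by
    ext v
    simp [LinearMap.restrict_apply]

@[simp] lemma resRep_apply {G V : Type} [Group G] [AddCommGroup V] [Module ℂ V]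
    (ρ : Representation ℂ G V) (W : Submodule ℂ V) (hW : ∀ g, ∀ v ∈ W, ρ g v ∈ W)
    (g : G) (w : ↥W) : (↑(resRep ρ W hW g w) : V) = ρ g ↑w := rfl

lemma avg_fixed {Γ V : Type*} [Group Γ] [Fintype Γ] [AddCommGroup V] [Module ℂ V]
    (ρ : Representation ℂ Γ V) (γ₀ : Γ) (v : V) :
    ρ γ₀ ((∑ γ : Γ, ρ γ) v) = (∑ γ : Γ, ρ γ) v := by
  rw [LinearMap.sum_apply, map_sum]
  rw [show ∑ γ : Γ, ρ γ₀ (ρ γ v) = ∑ γ : Γ, ρ (γ₀ * γ) v by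
    simp [map_mul, Module.End.mul_apply]]
  exact Fintype.sum_equiv (Equiv.mulLeft γ₀) _ _ fun x => by simp

lemma exists_invariant_compl {G V : Type} [Group G] [Finite G] [AddCommGroup V] [Module ℂ V]
    (ρ : Representation ℂ G V) (W W' : Submodule ℂ V)
    (hW : ∀ g, ∀ v ∈ W, ρ g v ∈ W) (hW' : ∀ g, ∀ v ∈ W', ρ g v ∈ W')
    (hle : W' ≤ W) :
    ∃ W'' : Submodule ℂ V, (∀ g, ∀ v ∈ W'', ρ g v ∈ W'') ∧ W'' ≤ W ∧
      W' ⊓ W'' = ⊥ ∧ W' ⊔ W'' = W := by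
  have : Fintype G := Fintype.ofFinite G
  obtain ⟨C, hC⟩ := Submodule.exists_isCompl W'
  set π₀ : V →ₗ[ℂ] V := W'.subtype ∘ₗ W'.linearProjOfIsCompl C hC with hπ₀
  have hπ₀mem : ∀ v, π₀ v ∈ W' := fun v => (W'.linearProjOfIsCompl C hC v).2
  have hπ₀fix : ∀ v ∈ W', π₀ v = v := by
    intro v hv
    have h1 : W'.linearProjOfIsCompl C hC v = ⟨v, hv⟩ :=
      Submodule.linearProjOfIsCompl_apply_left hC ⟨v, hv⟩
    simp [hπ₀, h1]
  set c : ℂ := (Nat.card G : ℂ)⁻¹ with hc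
  set T : V →ₗ[ℂ] V := c • ∑ g : G, ρ g ∘ₗ π₀ ∘ₗ ρ g⁻¹ with hT
  have hTapp : ∀ v, T v = c • ∑ g : G, ρ g (π₀ (ρ g⁻¹ v)) := by
    intro v; simp [hT, LinearMap.sum_apply]
  have hcard : (Nat.card G : ℂ) ≠ 0 := Nat.cast_ne_zero.2 Nat.card_pos.ne'
  have hTmem : ∀ v, T v ∈ W' := by
    intro v
    rw [hTapp]
    exact Submodule.smul_mem _ _ (Submodule.sum_mem _ fun g _ => hW' g _ (hπ₀mem _))
  have hTfix : ∀ v ∈ W', T v = v := by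
    intro v hv
    rw [hTapp]
    have h2 : ∀ g : G, ρ g (π₀ (ρ g⁻¹ v)) = v := by
      intro g
      rw [hπ₀fix _ (hW' g⁻¹ v hv), ← Module.End.mul_apply, ← map_mul, mul_inv_cancel, map_one,
        Module.End.one_apply]
    simp only [h2, Finset.sum_const, Finset.card_univ]
    rw [← Nat.cast_smul_eq_nsmul ℂ, smul_smul, hc, Nat.card_eq_fintype_card,
      inv_mul_cancel₀ (by rwa [Nat.card_eq_fintype_card] at hcard), one_smul]
  have hTequiv : ∀ g v, T (ρ g v) = ρ g (T v) := by
    intro g v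
    rw [hTapp, hTapp, map_smul, map_sum]
    congr 1
    have hcan : ∀ (y : G) (w : V), ρ y⁻¹ (ρ y w) = w := fun y w => by
      rw [← Module.End.mul_apply, ← map_mul, inv_mul_cancel, map_one, Module.End.one_apply]
    refine (Fintype.sum_equiv (Equiv.mulLeft g) _ _ fun x => ?_).symm
    simp [map_mul, mul_inv_rev, Module.End.mul_apply, mul_assoc, hcan]
  refine ⟨LinearMap.ker T ⊓ W, ?_, inf_le_right, ?_, ?_⟩
  · intro g v hv
    refine Submodule.mem_inf.2 ⟨?_, hW g v (Submodule.mem_inf.1 hv).2⟩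
    have h3 := (Submodule.mem_inf.1 hv).1
    rw [LinearMap.mem_ker] at h3 ⊢
    rw [hTequiv, h3, map_zero]
  · refine le_bot_iff.1 fun v hv => ?_
    obtain ⟨hv1, hv3⟩ := Submodule.mem_inf.1 hv
    obtain ⟨hv2, -⟩ := Submodule.mem_inf.1 hv3
    have h4 : T v = 0 := LinearMap.mem_ker.1 hv2
    have h5 : v = 0 := by rw [← hTfix v hv1, h4]
    simp [h5]
  · refine le_antisymm (sup_le hle inf_le_right) fun w hw => ?_
    have h6 : T (w - T w) = 0 := by
      rw [map_sub, hTfix _ (hTmem w), sub_self]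
    have h7 : w - T w ∈ LinearMap.ker T ⊓ W :=
      Submodule.mem_inf.2 ⟨LinearMap.mem_ker.2 h6, Submodule.sub_mem _ hw (hle (hTmem w))⟩
    have h8 : w = T w + (w - T w) := by abel
    rw [h8]
    exact Submodule.add_mem_sup (hTmem w) h7

end LPAux

open LPAux in
/-- If the bottom interval `[H, K]` of `[H, G]` (where `K` is the join of all atoms of
`[H, G]`) is linearly primitive, then `[H, G]` is linearly primitive. -/
theorem linearly_primitive_of_bottom_linearly_primitive {G : Type} [Group G] [Finite G]
    (H : Subgroup G) (hH : H ≠ ⊤) (K : Subgroup G)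
    (hK : K = sSup {A : Subgroup G | H < A ∧ ∀ B : Subgroup G, H < B → B ≤ A → B = A})
    (hbot : ∃ U : FDRep ℂ ↥K, IsIrredRep U.ρ ∧
      (repStab U.ρ ↑(fixedSubmodule U.ρ (H.subgroupOf K))).map K.subtype = H) :
    ∃ V : FDRep ℂ G, IsIrredRep V.ρ ∧ repStab V.ρ ↑(fixedSubmodule V.ρ H) = H := by
  classical
  obtain ⟨U, ⟨hUnt, hUirr⟩, hstab⟩ := hbot
  haveI := hUnt
  letI : Fintype G := Fintype.ofFinite G
  -- every subgroup strictly above H contains an atom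
  have hatom : ∀ L : Subgroup G, H < L →
      ∃ A, (H < A ∧ ∀ B : Subgroup G, H < B → B ≤ A → B = A) ∧ A ≤ L := by
    intro L hL
    obtain ⟨A, ⟨hA1, hA2⟩, hmin⟩ :=
      (wellFounded_lt (α := Subgroup G)).has_min {B | H < B ∧ B ≤ L} ⟨L, hL, le_rfl⟩
    exact ⟨A, ⟨hA1, fun B hB hBA =>
      hBA.lt_or_eq.resolve_left (hmin B ⟨hB, hBA.trans hA2⟩)⟩, hA2⟩
  have hHK : H ≤ K := by
    obtain ⟨A, hA, -⟩ := hatom ⊤ (lt_top_iff_ne_top.2 hH)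
    exact hA.1.le.trans (hK ▸ le_sSup hA)
  -- the induced space
  set σ := rreg G ↥U with hσ
  set P := indP K U.ρ with hP
  have hPinv := indP_invariant K U.ρ
  obtain ⟨u₀, hu₀⟩ := exists_ne (0 : ↥U)
  set f₀ : G → ↥U := fun g => if h : g ∈ K then U.ρ ⟨g, h⟩ u₀ else 0 with hf₀
  have hf₀P : f₀ ∈ P := by
    rw [hP, mem_indP]
    intro k g
    by_cases hg : g ∈ K
    · have hkg : (↑k * g : G) ∈ K := mul_mem k.2 hg
      have he : (⟨↑k * g, hkg⟩ : ↥K) = k * ⟨g, hg⟩ := rfl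
      simp only [hf₀, dif_pos hg, dif_pos hkg, he, map_mul, Module.End.mul_apply]
    · have hkg : (↑k * g : G) ∉ K := fun hmem => hg (by
        have h2 := mul_mem (inv_mem k.2) hmem
        rwa [inv_mul_cancel_left] at h2)
      simp only [hf₀, dif_neg hg, dif_neg hkg, map_zero]
  have hf₀1 : f₀ 1 = u₀ := by
    have h1 : (1 : G) ∈ K := one_mem K
    have he : (⟨(1 : G), h1⟩ : ↥K) = 1 := rfl
    simp only [hf₀, dif_pos h1, he, map_one, Module.End.one_apply]
  -- minimal invariant subspace with nonzero evaluation at 1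
  set S : Set (Submodule ℂ (G → ↥U)) :=
    {W | W ≤ P ∧ (∀ g, ∀ f ∈ W, σ g f ∈ W) ∧ ∃ f ∈ W, f 1 ≠ 0} with hS
  have hPS : P ∈ S := ⟨le_rfl, hPinv, f₀, hf₀P, by rw [hf₀1]; exact hu₀⟩
  obtain ⟨W, hWS, hWmin⟩ :=
    (wellFounded_lt (α := Submodule ℂ (G → ↥U))).has_min S ⟨P, hPS⟩
  obtain ⟨hWP, hWinv, fW, hfWW, hfW1⟩ := hWS
  set ρ' := resRep σ W hWinv with hρ'
  refine ⟨FDRep.of ρ', ?_, ?_⟩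
  · -- irreducibility
    show IsIrredRep ρ'
    constructor
    · refine nontrivial_of_ne ⟨fW, hfWW⟩ 0 fun hh => hfW1 ?_
      have h1 : fW = (0 : G → ↥U) := congrArg Subtype.val hh
      rw [h1]; rfl
    · intro p hp
      by_contra hcon
      push_neg at hcon
      obtain ⟨hpbot, hptop⟩ := hcon
      set W' := p.map W.subtype with hW'
      have hW'le : W' ≤ W := Submodule.map_subtype_le W p
      have hW'inv : ∀ g, ∀ v ∈ W', σ g v ∈ W' := by
        intro g v hv
        obtain ⟨x, hx, rfl⟩ := Submodule.mem_map.1 hv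
        exact Submodule.mem_map.2 ⟨ρ' g x, hp g x hx, rfl⟩
      have hW'ne_bot : W' ≠ ⊥ := by
        intro hb
        apply hpbot
        refine (Submodule.eq_bot_iff _).2 fun x hx => ?_
        have : (↑x : G → ↥U) ∈ W' := Submodule.mem_map.2 ⟨x, hx, rfl⟩
        rw [hb, Submodule.mem_bot] at this
        exact Subtype.ext this
      have hW'ne : W' ≠ W := by
        intro he
        apply hptop
        refine Submodule.eq_top_iff'.2 fun x => ?_
        have hx : (↑x : G → ↥U) ∈ W' := by rw [he]; exact x.2
        obtain ⟨y, hy, hyx⟩ := Submodule.mem_map.1 hx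
        rwa [show y = x from Subtype.ext hyx] at hy
      obtain ⟨W'', hW''inv, hW''le, hinf, hsup⟩ :=
        exists_invariant_compl σ W W' hWinv hW'inv hW'le
      by_cases hev : ∃ f ∈ W', f 1 ≠ 0
      · exact hWmin W' ⟨hW'le.trans hWP, hW'inv, hev⟩ (lt_of_le_of_ne hW'le hW'ne)
      · push_neg at hev
        have hev'' : ∃ f ∈ W'', f 1 ≠ 0 := by
          by_contra hev2
          push_neg at hev2
          apply hfW1
          have hmem : fW ∈ W' ⊔ W'' := hsup ▸ hfWW
          obtain ⟨a, ha, b, hb, rfl⟩ := Submodule.mem_sup.1 hmem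
          have : (a + b) 1 = a 1 + b 1 := rfl
          rw [this, hev a ha, hev2 b hb, add_zero]
        have hW''ne : W'' ≠ W := by
          intro he
          obtain ⟨x, hx, hxne⟩ := Submodule.exists_mem_ne_zero_of_ne_bot hW'ne_bot
          have hmem : x ∈ W' ⊓ W'' := Submodule.mem_inf.2 ⟨hx, he ▸ hW'le hx⟩
          rw [hinf, Submodule.mem_bot] at hmem
          exact hxne hmem
        exact hWmin W'' ⟨hW''le.trans hWP, hW''inv, hev''⟩ (lt_of_le_of_ne hW''le hW''ne)
  · -- stabilizer
    show repStab ρ' ↑(fixedSubmodule ρ' H) = H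
    set Φ : ↥W →ₗ[ℂ] ↥U := (LinearMap.proj (1 : G)) ∘ₗ W.subtype with hΦ
    have hΦapp : ∀ w : ↥W, Φ w = (↑w : G → ↥U) 1 := fun w => rfl
    have hΦeq : ∀ (k : ↥K) (w : ↥W), Φ (ρ' ↑k w) = U.ρ k (Φ w) := by
      intro k w
      have h1 : Φ (ρ' ↑k w) = (↑w : G → ↥U) (1 * ↑k) := rfl
      have h3 : (↑w : G → ↥U) (↑k * 1) = U.ρ k ((↑w : G → ↥U) 1) := (mem_indP.1 (hWP w.2)) k 1
      rw [h1, show ((1 : G) * ↑k) = (↑k * 1 : G) by rw [one_mul, mul_one], h3, hΦapp]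
    have hΦsurj : ∀ u : ↥U, ∃ w : ↥W, Φ w = u := by
      have hrinv : ∀ k : ↥K, ∀ u ∈ LinearMap.range Φ, U.ρ k u ∈ LinearMap.range Φ := by
        intro k u hu
        obtain ⟨w, rfl⟩ := hu
        exact ⟨ρ' ↑k w, hΦeq k w⟩
      rcases hUirr (LinearMap.range Φ) hrinv with hb | ht
      · exfalso
        have h1 : Φ ⟨fW, hfWW⟩ ≠ 0 := by rw [hΦapp]; exact hfW1
        have h2 : Φ ⟨fW, hfWW⟩ ∈ LinearMap.range Φ := ⟨_, rfl⟩
        rw [hb, Submodule.mem_bot] at h2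
        exact h1 h2
      · intro u
        have : u ∈ LinearMap.range Φ := ht ▸ Submodule.mem_top
        exact this
    letI : Fintype ↥H := Fintype.ofFinite ↥H
    set ρH : Representation ℂ ↥H ↥W := ρ'.comp H.subtype with hρH
    set cH : ℂ := (Nat.card ↥H : ℂ)⁻¹ with hcH
    have hcHne : (Nat.card ↥H : ℂ) ≠ 0 := Nat.cast_ne_zero.2 Nat.card_pos.ne'
    set Q : ↥W →ₗ[ℂ] ↥W := cH • ∑ h : ↥H, ρ' ↑h with hQ
    have hQfix : ∀ h₀ ∈ H, ∀ w, ρ' h₀ (Q w) = Q w := by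
      intro h₀ hh₀ w
      have h1 : ρ' h₀ ((∑ h : ↥H, ρ' (↑h : G)) w) = (∑ h : ↥H, ρ' (↑h : G)) w :=
        avg_fixed ρH ⟨h₀, hh₀⟩ w
      calc ρ' h₀ (Q w) = cH • ρ' h₀ ((∑ h : ↥H, ρ' (↑h : G)) w) := by
            rw [hQ, LinearMap.smul_apply, map_smul]
        _ = cH • (∑ h : ↥H, ρ' (↑h : G)) w := by rw [h1]
        _ = Q w := by rw [hQ, LinearMap.smul_apply]
    have hQmem : ∀ w, Q w ∈ fixedSubmodule ρ' H := fun w h hh => hQfix h hh w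
    have hΦQ : ∀ w : ↥W, ∀ u ∈ fixedSubmodule U.ρ (H.subgroupOf K), Φ w = u → Φ (Q w) = u := by
      intro w u hu hwu
      have h1 : Φ (Q w) = cH • ∑ h : ↥H, Φ (ρ' ↑h w) := by
        simp [hQ, LinearMap.smul_apply, LinearMap.sum_apply, map_smul, map_sum]
      have h2 : ∀ h : ↥H, Φ (ρ' ↑h w) = u := by
        intro h
        have hk : ((↑h : G)) ∈ K := hHK h.2
        have h4 : (⟨(↑h : G), hk⟩ : ↥K) ∈ H.subgroupOf K := Subgroup.mem_subgroupOf.2 h.2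
        calc Φ (ρ' ↑h w) = U.ρ ⟨(↑h : G), hk⟩ (Φ w) := hΦeq ⟨(↑h : G), hk⟩ w
          _ = U.ρ ⟨(↑h : G), hk⟩ u := by rw [hwu]
          _ = u := hu _ h4
      rw [h1]
      simp only [h2, Finset.sum_const, Finset.card_univ]
      rw [← Nat.cast_smul_eq_nsmul ℂ, smul_smul, hcH, Nat.card_eq_fintype_card,
        inv_mul_cancel₀ (by rwa [Nat.card_eq_fintype_card] at hcHne), one_smul]
    have hKL : ∀ a : G, a ∈ K → a ∈ repStab ρ' ↑(fixedSubmodule ρ' H) → a ∈ H := by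
      intro a haK haL
      rw [← hstab]
      refine Subgroup.mem_map.2 ⟨⟨a, haK⟩, ?_, rfl⟩
      intro u hu
      have hu' : u ∈ fixedSubmodule U.ρ (H.subgroupOf K) := hu
      obtain ⟨w, hw⟩ := hΦsurj u
      have hQw := hΦQ w u hu' hw
      have hfixa : ρ' a (Q w) = Q w := haL (Q w) (hQmem w)
      calc U.ρ ⟨a, haK⟩ u = U.ρ ⟨a, haK⟩ (Φ (Q w)) := by rw [hQw]
        _ = Φ (ρ' ↑(⟨a, haK⟩ : ↥K) (Q w)) := (hΦeq _ _).symm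
        _ = Φ (Q w) := by rw [show ((↑(⟨a, haK⟩ : ↥K)) : G) = a from rfl, hfixa]
        _ = u := hQw
    have hHle : H ≤ repStab ρ' ↑(fixedSubmodule ρ' H) := by
      intro h hh x hx
      exact hx h hh
    refine le_antisymm ?_ hHle
    intro a haL
    by_contra haH
    have hHL : H < repStab ρ' ↑(fixedSubmodule ρ' H) :=
      lt_of_le_of_ne hHle fun he => haH (he ▸ haL)
    obtain ⟨A, hA, hAL⟩ := hatom _ hHL
    have hAK : A ≤ K := hK ▸ le_sSup hA
    exact absurd (show A ≤ H from fun x hx => hKL x (hAK hx) (hAL hx)) hA.1.not_ge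
end
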